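/- Lower bound for approximating a sequence with prescribed dyadic growth by bounded sequences (optimality argument, Section 2.4): Let γ ∈ (−1,0), C₀ > 0 and J ∈ ℕ. There exist constants c > 0 and K₀ ≥ 1 such that for every real K ≥ K₀ and all sequences (a_j)_{j∈ℕ} and (b_j)_{j∈ℕ} of nonnegative real numbers satisfying a_j ≥ C₀·2^{−jγ} for all j ≥ J and b_j ≤ K for all j ∈ ℕ, one has sup_{j∈ℕ} 2^{j(γ−1)}·|a_j − b_j| ≥ c·K^{1/γ}. -/

import Mathlib

open Real

/-- **Lower bound for approximating a sequence with prescribed dyadic growth by bounded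
sequences** (optimality argument, Section 2.4).  Let `γ ∈ (-1,0)`, `C₀ > 0`, `J ∈ ℕ`.
There exist `c > 0` and `K₀ ≥ 1` such that for every `K ≥ K₀` and all nonnegative
sequences `(a_j)`, `(b_j)` with `a_j ≥ C₀ 2^{-jγ}` for `j ≥ J` and `b_j ≤ K` for all
`j`, one has `sup_j 2^{j(γ-1)} |a_j - b_j| ≥ c K^{1/γ}` (witnessed at some index `j`). -/
theorem dyadic_approximation_lower_bound
    (γ : ℝ) (hγ : γ ∈ Set.Ioo (-1 : ℝ) 0) (C₀ : ℝ) (hC₀ : 0 < C₀) (J : ℕ) :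
    ∃ c : ℝ, 0 < c ∧ ∃ K₀ : ℝ, 1 ≤ K₀ ∧
      ∀ K : ℝ, K₀ ≤ K →
      ∀ a b : ℕ → ℝ,
        (∀ j : ℕ, 0 ≤ a j) → (∀ j : ℕ, 0 ≤ b j) →
        (∀ j : ℕ, J ≤ j → C₀ * (2 : ℝ) ^ (-(j : ℝ) * γ) ≤ a j) →
        (∀ j : ℕ, b j ≤ K) →
        ∃ j : ℕ, c * K ^ (1 / γ) ≤ (2 : ℝ) ^ ((j : ℝ) * (γ - 1)) * |a j - b j| := by
  obtain ⟨hγ1, hγ0⟩ := hγ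
  have hγne : γ ≠ 0 := ne_of_lt hγ0
  refine ⟨(2 : ℝ) ^ (((J : ℝ) + 1) * (γ - 1)) * (2 / C₀) ^ ((1 - γ) / γ), ?_,
    max 1 C₀, le_max_left _ _, ?_⟩
  · have h1 : (0:ℝ) < (2 : ℝ) ^ (((J : ℝ) + 1) * (γ - 1)) := Real.rpow_pos_of_pos two_pos _
    have h2 : (0:ℝ) < (2 / C₀ : ℝ) ^ ((1 - γ) / γ) :=
      Real.rpow_pos_of_pos (by positivity) _
    positivity
  intro K hK a b ha hb haJ hbK
  have hK1 : (1:ℝ) ≤ K := le_trans (le_max_left _ _) hK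
  have hKC : C₀ ≤ K := le_trans (le_max_right _ _) hK
  have hK0 : (0:ℝ) < K := lt_of_lt_of_le one_pos hK1
  have hγneg : (0:ℝ) < -γ := by linarith
  set t : ℝ := Real.logb 2 (2 * K / C₀) / (-γ) with ht
  have hratio0 : (0:ℝ) < 2 * K / C₀ := by positivity
  have hratio : (1:ℝ) ≤ 2 * K / C₀ := by
    rw [le_div_iff₀ hC₀]; nlinarith
  have hlogb0 : 0 ≤ Real.logb 2 (2 * K / C₀) := Real.logb_nonneg one_lt_two hratio
  have ht0 : 0 ≤ t := div_nonneg hlogb0 hγneg.le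
  set j : ℕ := J + Nat.ceil t with hj
  have hjt : t ≤ (j : ℝ) := by
    have h := Nat.le_ceil t
    have : ((Nat.ceil t : ℕ) : ℝ) ≤ (j : ℝ) := by
      rw [hj]; push_cast; linarith [Nat.cast_nonneg (α := ℝ) J]
    linarith
  have hjle : (j : ℝ) ≤ (J : ℝ) + t + 1 := by
    have h := Nat.ceil_lt_add_one ht0
    rw [hj]; push_cast; linarith
  refine ⟨j, ?_⟩
  -- Step 1: a j ≥ 2K
  have hlogeq : Real.logb 2 (2 * K / C₀) = t * (-γ) := by
    rw [ht]; field_simp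
  have h2 : 2 * K / C₀ ≤ (2:ℝ) ^ (-(j:ℝ) * γ) := by
    have hle : Real.logb 2 (2 * K / C₀) ≤ -(j:ℝ) * γ := by
      rw [hlogeq]; nlinarith
    calc 2 * K / C₀ = (2:ℝ) ^ Real.logb 2 (2 * K / C₀) :=
          (Real.rpow_logb two_pos (by norm_num) hratio0).symm
      _ ≤ _ := Real.rpow_le_rpow_of_exponent_le one_le_two hle
  have haK : 2 * K ≤ a j := by
    have h1 := haJ j (by omega)
    have h2' : 2 * K ≤ C₀ * (2:ℝ) ^ (-(j:ℝ) * γ) := by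
      rw [div_le_iff₀ hC₀] at h2
      linarith [h2]
    linarith
  have habs : K ≤ |a j - b j| := by
    have hb' := hbK j
    rw [abs_of_nonneg (by linarith)]
    linarith
  -- Step 2: the constant computation
  have hpow_pos : (0:ℝ) < (2:ℝ) ^ ((j:ℝ) * (γ - 1)) := Real.rpow_pos_of_pos two_pos _
  have key : (2 : ℝ) ^ (((J : ℝ) + 1) * (γ - 1)) * (2 / C₀) ^ ((1 - γ) / γ) * K ^ (1 / γ)
      = (2:ℝ) ^ (((J:ℝ) + t + 1) * (γ - 1)) * K := by
    have e1 : (2:ℝ) ^ (((J:ℝ) + t + 1) * (γ - 1))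
        = (2:ℝ) ^ (((J:ℝ) + 1) * (γ - 1)) * (2:ℝ) ^ (t * (γ - 1)) := by
      rw [← Real.rpow_add two_pos]; ring_nf
    have e2 : (2:ℝ) ^ (t * (γ - 1)) = (2 * K / C₀) ^ ((1 - γ) / γ) := by
      have : t * (γ - 1) = Real.logb 2 (2 * K / C₀) * ((1 - γ) / γ) := by
        rw [hlogeq]; field_simp; ring
      rw [this, Real.rpow_mul (by norm_num), Real.rpow_logb two_pos (by norm_num) hratio0]
    have e3 : (2 * K / C₀) ^ ((1 - γ) / γ)
        = (2 / C₀) ^ ((1 - γ) / γ) * K ^ ((1 - γ) / γ) := by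
      have : 2 * K / C₀ = (2 / C₀) * K := by ring
      rw [this, Real.mul_rpow (by positivity) hK0.le]
    have e4 : K ^ ((1 - γ) / γ) * K = K ^ (1 / γ) := by
      nth_rewrite 2 [← Real.rpow_one K]
      rw [← Real.rpow_add hK0]
      congr 1
      field_simp
      ring
    rw [e1, e2, e3]
    rw [← e4]
    ring
  have hmono : (2:ℝ) ^ (((J:ℝ) + t + 1) * (γ - 1)) ≤ (2:ℝ) ^ ((j:ℝ) * (γ - 1)) := by
    apply Real.rpow_le_rpow_of_exponent_le one_le_two
    nlinarith
  calc (2 : ℝ) ^ (((J : ℝ) + 1) * (γ - 1)) * (2 / C₀) ^ ((1 - γ) / γ) * K ^ (1 / γ)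
      = (2:ℝ) ^ (((J:ℝ) + t + 1) * (γ - 1)) * K := key
    _ ≤ (2:ℝ) ^ ((j:ℝ) * (γ - 1)) * K := by
        apply mul_le_mul_of_nonneg_right hmono hK0.le
    _ ≤ (2:ℝ) ^ ((j:ℝ) * (γ - 1)) * |a j - b j| := by
        apply mul_le_mul_of_nonneg_left habs hpow_pos.le
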